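/- Let G be a graph with twin vertices a and b (equal open neighborhoods, non-adjacent). Then there exists a minimum fill-in ordering of G in which a and b are eliminated consecutively. -/

import Mathlib

open SimpleGraph

attribute [local instance] Classical.propDecidable

variable {V : Type*} [Fintype V] [DecidableEq V]

/-- The elimination graph `G_x`: delete `x` and complete its neighborhood to a clique.
(The eliminated vertex is kept as an isolated vertex.) -/
def elimG (G : SimpleGraph V) (x : V) : SimpleGraph V where
  Adj u v := u ≠ v ∧ u ≠ x ∧ v ≠ x ∧ (G.Adj u v ∨ (G.Adj x u ∧ G.Adj x v))
  symm := by
    constructor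
    intro u v h
    obtain ⟨h1, h2, h3, h4⟩ := h
    refine ⟨h1.symm, h3, h2, ?_⟩
    rcases h4 with h | ⟨h4, h5⟩
    · exact Or.inl h.symm
    · exact Or.inr ⟨h5, h4⟩
  loopless := by constructor; intro v h; exact h.1 rfl

/-- The deficiency `D(x)`: the set of unordered pairs of distinct, non-adjacent
neighbors of `x`. -/
noncomputable def deficiencyFinset (G : SimpleGraph V) (x : V) : Finset (Sym2 V) :=
  ((Finset.univ ×ˢ Finset.univ : Finset (V × V)).filter
    (fun p => p.1 ≠ p.2 ∧ G.Adj x p.1 ∧ G.Adj x p.2 ∧ ¬ G.Adj p.1 p.2)).image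
    (fun p => s(p.1, p.2))

/-- Successive elimination of a list of vertices. -/
def elimList : SimpleGraph V → List V → SimpleGraph V
  | G, [] => G
  | G, x :: xs => elimList (elimG G x) xs

/-- The fill-in of an elimination ordering given as a list: the total number of
edges added during the elimination process. -/
noncomputable def fillList : SimpleGraph V → List V → ℕ
  | _, [] => 0
  | G, x :: xs => (deficiencyFinset G x).card + fillList (elimG G x) xs

/-- The set of fill edges added during the elimination process. -/
noncomputable def fillEdges : SimpleGraph V → List V → Finset (Sym2 V)
  | _, [] => ∅
  | G, x :: xs => deficiencyFinset G x ∪ fillEdges (elimG G x) xs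

/-- A list is an (elimination) ordering if it enumerates every vertex exactly once. -/
def IsOrdering (L : List V) : Prop := L.Nodup ∧ ∀ v : V, v ∈ L

/-- The minimum fill-in `Φ(G)`. -/
noncomputable def minFillIn (G : SimpleGraph V) : ℕ :=
  sInf {n | ∃ L : List V, IsOrdering L ∧ fillList G L = n}

/-- A vertex is simplicial if its neighborhood is a clique. -/
def IsSimplicial (G : SimpleGraph V) (x : V) : Prop :=
  ∀ a b, G.Adj x a → G.Adj x b → a ≠ b → G.Adj a b

/-- `a` and `b` are indistinguishable: equal closed neighborhoods. -/
def Indistinguishable (G : SimpleGraph V) (a b : V) : Prop :=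
  a ≠ b ∧ insert a (G.neighborSet a) = insert b (G.neighborSet b)

/-- `a` and `b` are twins: equal open neighborhoods (hence non-adjacent). -/
def Twins (G : SimpleGraph V) (a b : V) : Prop :=
  a ≠ b ∧ G.neighborSet a = G.neighborSet b

/-- Chordality: no induced cycle of length at least 4, equivalently every cycle of
length at least 4 has a chord. -/
def IsChordal (G : SimpleGraph V) : Prop :=
  ∀ n : ℕ, 4 ≤ n → ∀ f : ZMod n → V, Function.Injective f →
    ¬ (∀ i j : ZMod n, G.Adj (f i) (f j) ↔ (j = i + 1 ∨ i = j + 1))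

/-- `T` is a triangulation of `G`: a set of non-edges whose addition makes `G` chordal. -/
def IsTriangulation (G : SimpleGraph V) (T : Finset (Sym2 V)) : Prop :=
  (∀ e ∈ T, ¬ e.IsDiag ∧ e ∉ G.edgeSet) ∧
    IsChordal (G ⊔ SimpleGraph.fromEdgeSet (↑T : Set (Sym2 V)))

/-- A minimum triangulation. -/
def IsMinTriangulation (G : SimpleGraph V) (T : Finset (Sym2 V)) : Prop :=
  IsTriangulation G T ∧ ∀ T' : Finset (Sym2 V), IsTriangulation G T' → T.card ≤ T'.card

/-- The graph obtained from `G` by deleting the vertices in `S`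
(deleted vertices are kept as isolated vertices). -/
def deleteSet (G : SimpleGraph V) (S : Set V) : SimpleGraph V where
  Adj u v := G.Adj u v ∧ u ∉ S ∧ v ∉ S
  symm := ⟨fun _ _ ⟨h, hu, hv⟩ => ⟨h.symm, hv, hu⟩⟩
  loopless := ⟨fun v h => G.irrefl h.1⟩

section Aux
set_option linter.unusedSectionVars false
variable {V : Type*} [Fintype V] [DecidableEq V]

@[simp] lemma elimG_adj (G : SimpleGraph V) (x u v : V) :
    (elimG G x).Adj u v ↔ u ≠ v ∧ u ≠ x ∧ v ≠ x ∧ (G.Adj u v ∨ (G.Adj x u ∧ G.Adj x v)) :=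
  Iff.rfl

lemma mem_deficiency {G : SimpleGraph V} {x : V} {e : Sym2 V} :
    e ∈ deficiencyFinset G x ↔
      ∃ u v, u ≠ v ∧ G.Adj x u ∧ G.Adj x v ∧ ¬ G.Adj u v ∧ s(u, v) = e := by
  unfold deficiencyFinset
  simp only [Finset.mem_image, Finset.mem_filter, Finset.mem_product, Finset.mem_univ,
    true_and, Prod.exists]
  constructor
  · rintro ⟨u, v, ⟨h1, h2, h3, h4⟩, h5⟩; exact ⟨u, v, h1, h2, h3, h4, h5⟩
  · rintro ⟨u, v, h1, h2, h3, h4, h5⟩; exact ⟨u, v, ⟨h1, h2, h3, h4⟩, h5⟩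

lemma simplicial_def_empty {G : SimpleGraph V} {x : V} (h : IsSimplicial G x) :
    deficiencyFinset G x = ∅ := by
  ext e
  simp only [mem_deficiency, Finset.notMem_empty, iff_false]
  rintro ⟨u, v, h1, h2, h3, h4, -⟩
  exact h4 (h u v h2 h3 h1)

lemma simplicial_elim {G : SimpleGraph V} {x : V} (h : IsSimplicial G x) {y : V} (hyx : y ≠ x) :
    IsSimplicial (elimG G y) x := by
  intro u v hu hv huv
  obtain ⟨-, hxy, huy, hu4⟩ := hu
  obtain ⟨-, -, hvy, hv4⟩ := hv
  have key : ∀ w, w ≠ y → (G.Adj x w ∨ (G.Adj y x ∧ G.Adj y w)) → G.Adj y w → G.Adj y w :=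
    fun w _ _ hw => hw
  -- derive that each of u, v is g-adjacent to y whenever needed
  rcases hu4 with hu4 | ⟨hayx, hyu⟩
  · rcases hv4 with hv4 | ⟨hayx, hyv⟩
    · exact ⟨huv, huy, hvy, Or.inl (h u v hu4 hv4 huv)⟩
    · have hyu : G.Adj y u := (h u y hu4 hayx.symm huy).symm
      exact ⟨huv, huy, hvy, Or.inr ⟨hyu, hyv⟩⟩
  · rcases hv4 with hv4 | ⟨hayx, hyv⟩
    · have hyv : G.Adj y v := (h v y hv4 hayx.symm hvy).symm
      exact ⟨huv, huy, hvy, Or.inr ⟨hyu, hyv⟩⟩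
    · exact ⟨huv, huy, hvy, Or.inr ⟨hyu, hyv⟩⟩

/-- The relation between `H` (state after early simplicial elimination of `x`)
and `G` (state without that elimination). -/
structure RelE (x : V) (H G : SimpleGraph V) : Prop where
  le : ∀ u v, H.Adj u v → G.Adj u v
  iso : ∀ u, ¬ H.Adj x u
  ge : ∀ u v, u ≠ x → v ≠ x → G.Adj u v → H.Adj u v

lemma RelE.self {G : SimpleGraph V} {x : V} (h : IsSimplicial G x) :
    RelE x (elimG G x) G where
  le := by
    rintro u v ⟨huv, hux, hvx, h4 | ⟨h4, h5⟩⟩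
    · exact h4
    · exact h u v h4 h5 huv
  iso := by rintro u ⟨-, hxx, -, -⟩; exact hxx rfl
  ge := fun u v hux hvx huv => ⟨huv.ne, hux, hvx, Or.inl huv⟩

lemma RelE.step {x : V} {H G : SimpleGraph V} (h : RelE x H G) {y : V} (hyx : y ≠ x) :
    RelE x (elimG H y) (elimG G y) where
  le := by
    rintro u v ⟨huv, huy, hvy, h4 | ⟨h4, h5⟩⟩
    · exact ⟨huv, huy, hvy, Or.inl (h.le _ _ h4)⟩
    · exact ⟨huv, huy, hvy, Or.inr ⟨h.le _ _ h4, h.le _ _ h5⟩⟩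
  iso := by
    rintro u ⟨-, -, -, h4 | ⟨h4, -⟩⟩
    · exact h.iso _ h4
    · exact h.iso _ h4.symm
  ge := by
    rintro u v hux hvx ⟨huv, huy, hvy, h4 | ⟨h4, h5⟩⟩
    · exact ⟨huv, huy, hvy, Or.inl (h.ge _ _ hux hvx h4)⟩
    · exact ⟨huv, huy, hvy, Or.inr ⟨h.ge _ _ hyx hux h4, h.ge _ _ hyx hvx h5⟩⟩

lemma RelE.adj_ne {x : V} {H G : SimpleGraph V} (h : RelE x H G) {u v : V} (huv : H.Adj u v) :
    u ≠ x ∧ v ≠ x := by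
  constructor
  · rintro rfl; exact h.iso _ huv
  · rintro rfl; exact h.iso _ huv.symm

lemma RelE.def_subset {x : V} {H G : SimpleGraph V} (h : RelE x H G) (y : V) :
    deficiencyFinset H y ⊆ deficiencyFinset G y := by
  intro e he
  rw [mem_deficiency] at he ⊢
  obtain ⟨u, v, h1, h2, h3, h4, h5⟩ := he
  refine ⟨u, v, h1, h.le _ _ h2, h.le _ _ h3, fun hG => h4 ?_, h5⟩
  exact h.ge _ _ (h.adj_ne h2).2 (h.adj_ne h3).2 hG

lemma RelE.elimG_eq {x : V} {H G : SimpleGraph V} (h : RelE x H G) (hs : IsSimplicial G x) :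
    elimG G x = H := by
  ext u v
  constructor
  · rintro ⟨huv, hux, hvx, h4 | ⟨h4, h5⟩⟩
    · exact h.ge _ _ hux hvx h4
    · exact h.ge _ _ hux hvx (hs u v h4 h5 huv)
  · intro huv
    obtain ⟨hux, hvx⟩ := h.adj_ne huv
    exact ⟨(h.le _ _ huv).ne, hux, hvx, Or.inl (h.le _ _ huv)⟩

lemma fillList_cons (G : SimpleGraph V) (y : V) (l : List V) :
    fillList G (y :: l) = (deficiencyFinset G y).card + fillList (elimG G y) l := rfl

lemma fill_le {x : V} : ∀ (Q : List V) (R : List V) (G H : SimpleGraph V), x ∉ Q →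
    RelE x H G → IsSimplicial G x → fillList H (Q ++ R) ≤ fillList G (Q ++ x :: R) := by
  intro Q
  induction Q with
  | nil =>
    intro R G H _ hrel hs
    rw [List.nil_append, List.nil_append, fillList_cons, simplicial_def_empty hs,
      hrel.elimG_eq hs]
    simp
  | cons y Q ih =>
    intro R G H hx hrel hs
    have hyx : y ≠ x := fun hh => hx (hh ▸ (List.mem_cons_self : y ∈ y :: Q))
    rw [List.cons_append, List.cons_append, fillList_cons, fillList_cons]
    refine Nat.add_le_add (Finset.card_le_card (hrel.def_subset y)) ?_
    exact ih R _ _ (fun hh => hx (List.mem_cons_of_mem _ hh)) (hrel.step hyx)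
      (simplicial_elim hs hyx)

lemma fillList_append (P : List V) : ∀ (G : SimpleGraph V) (t : List V),
    fillList G (P ++ t) = fillList G P + fillList (elimList G P) t := by
  induction P with
  | nil => intro G t; simp [fillList, elimList]
  | cons y P ih =>
    intro G t
    rw [List.cons_append, fillList_cons, ih, fillList_cons]
    simp [elimList, Nat.add_assoc]

end Aux
section Aux2
set_option linter.unusedSectionVars false
set_option linter.unusedVariables false
variable {V : Type*} [Fintype V] [DecidableEq V]

/-- `a` and `b` are siblings: distinct and with the same neighbors among other vertices. -/
def Sib (G : SimpleGraph V) (a b : V) : Prop :=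
  a ≠ b ∧ ∀ u, u ≠ a → u ≠ b → (G.Adj a u ↔ G.Adj b u)

lemma Sib.symm {G : SimpleGraph V} {a b : V} (h : Sib G a b) : Sib G b a :=
  ⟨h.1.symm, fun u hub hua => (h.2 u hua hub).symm⟩

lemma Twins.sib {G : SimpleGraph V} {a b : V} (h : Twins G a b) : Sib G a b := by
  refine ⟨h.1, fun u _ _ => ?_⟩
  have := h.2
  constructor
  · intro hadj
    have : u ∈ G.neighborSet b := h.2 ▸ hadj
    exact this
  · intro hadj
    have : u ∈ G.neighborSet a := h.2.symm ▸ hadj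
    exact this

lemma Sib.adj_iff {G : SimpleGraph V} {a b : V} (h : Sib G a b) {y : V}
    (hya : y ≠ a) (hyb : y ≠ b) : G.Adj y a ↔ G.Adj y b := by
  rw [adj_comm, adj_comm G y b]
  exact h.2 y hya hyb

lemma Sib.elim {G : SimpleGraph V} {a b : V} (h : Sib G a b) {y : V}
    (hya : y ≠ a) (hyb : y ≠ b) : Sib (elimG G y) a b := by
  refine ⟨h.1, fun u hua hub => ?_⟩
  simp only [elimG_adj]
  constructor
  · rintro ⟨h1, h2, h3, h4 | ⟨h4, h5⟩⟩
    · exact ⟨Ne.symm hub, Ne.symm hyb, h3, Or.inl ((h.2 u hua hub).mp h4)⟩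
    · exact ⟨Ne.symm hub, Ne.symm hyb, h3, Or.inr ⟨(h.adj_iff hya hyb).mp h4, h5⟩⟩
  · rintro ⟨h1, h2, h3, h4 | ⟨h4, h5⟩⟩
    · exact ⟨Ne.symm hua, Ne.symm hya, h3, Or.inl ((h.2 u hua hub).mpr h4)⟩
    · exact ⟨Ne.symm hua, Ne.symm hya, h3, Or.inr ⟨(h.adj_iff hya hyb).mpr h4, h5⟩⟩

lemma Sib.def_subset {G : SimpleGraph V} {a b : V} (h : Sib G a b) :
    deficiencyFinset G a ⊆ deficiencyFinset G b := by
  intro e he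
  rw [mem_deficiency] at he ⊢
  obtain ⟨u, v, h1, h2, h3, h4, h5⟩ := he
  have hub : u ≠ b := by
    rintro rfl
    exact h4 ((h.2 v h3.ne' h1.symm).mp h3)
  have hvb : v ≠ b := by
    rintro rfl
    exact h4 (((h.2 u h2.ne' h1).mp h2).symm)
  exact ⟨u, v, h1, (h.2 u h2.ne' hub).mp h2, (h.2 v h3.ne' hvb).mp h3, h4, h5⟩

lemma Sib.def_eq {G : SimpleGraph V} {a b : V} (h : Sib G a b) :
    deficiencyFinset G a = deficiencyFinset G b :=
  le_antisymm h.def_subset h.symm.def_subset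

lemma Sib.simplicial_after {G : SimpleGraph V} {a b : V} (h : Sib G a b) :
    IsSimplicial (elimG G a) b := by
  intro u v hu hv huv
  obtain ⟨hbu, hba, hua, hu4⟩ := hu
  obtain ⟨hbv, -, hva, hv4⟩ := hv
  have hau : G.Adj a u := by
    rcases hu4 with h4 | ⟨-, h4⟩
    · exact (h.2 u hua (fun hh => hbu hh.symm)).mpr h4
    · exact h4
  have hav : G.Adj a v := by
    rcases hv4 with h4 | ⟨-, h4⟩
    · exact (h.2 v hva (fun hh => hbv hh.symm)).mpr h4
    · exact h4
  exact ⟨huv, hua, hva, Or.inr ⟨hau, hav⟩⟩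

lemma Sib.elim_adj_iff {G : SimpleGraph V} {a b : V} (h : Sib G a b) (u : V) :
    (elimG G a).Adj b u ↔ (u ≠ a ∧ u ≠ b ∧ G.Adj a u) := by
  constructor
  · rintro ⟨hbu, hba, hua, h4 | ⟨-, h4⟩⟩
    · exact ⟨hua, fun hh => hbu hh.symm, (h.2 u hua (fun hh => hbu hh.symm)).mpr h4⟩
    · exact ⟨hua, fun hh => hbu (hh.symm), h4⟩
  · rintro ⟨hua, hub, hau⟩
    exact ⟨Ne.symm hub, h.1.symm, hua, Or.inl ((h.2 u hua hub).mp hau)⟩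

lemma Sib.double_adj {G : SimpleGraph V} {a b : V} (h : Sib G a b) (u v : V) :
    (elimG (elimG G a) b).Adj u v ↔
      u ≠ v ∧ u ≠ a ∧ u ≠ b ∧ v ≠ a ∧ v ≠ b ∧
        (G.Adj u v ∨ (G.Adj a u ∧ G.Adj a v)) := by
  constructor
  · rintro ⟨huv, hub, hvb, h4 | ⟨h4, h5⟩⟩
    · obtain ⟨-, hua, hva, h6⟩ := h4
      exact ⟨huv, hua, hub, hva, hvb, h6⟩
    · rw [h.elim_adj_iff] at h4 h5
      exact ⟨huv, h4.1, hub, h5.1, hvb, Or.inr ⟨h4.2.2, h5.2.2⟩⟩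
  · rintro ⟨huv, hua, hub, hva, hvb, h6 | ⟨h6, h7⟩⟩
    · exact ⟨huv, hub, hvb, Or.inl ⟨huv, hua, hva, Or.inl h6⟩⟩
    · refine ⟨huv, hub, hvb, Or.inr ?_⟩
      rw [h.elim_adj_iff, h.elim_adj_iff]
      exact ⟨⟨hua, hub, h6⟩, ⟨hva, hvb, h7⟩⟩

lemma Sib.swap_eq {G : SimpleGraph V} {a b : V} (h : Sib G a b) :
    elimG (elimG G a) b = elimG (elimG G b) a := by
  ext u v
  rw [h.double_adj, h.symm.double_adj]
  constructor
  · rintro ⟨h1, h2, h3, h4, h5, h6 | ⟨h6, h7⟩⟩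
    · exact ⟨h1, h3, h2, h5, h4, Or.inl h6⟩
    · exact ⟨h1, h3, h2, h5, h4, Or.inr ⟨(h.2 u h2 h3).mp h6, (h.2 v h4 h5).mp h7⟩⟩
  · rintro ⟨h1, h2, h3, h4, h5, h6 | ⟨h6, h7⟩⟩
    · exact ⟨h1, h3, h2, h5, h4, Or.inl h6⟩
    · exact ⟨h1, h3, h2, h5, h4, Or.inr ⟨(h.2 u h3 h2).mpr h6, (h.2 v h5 h4).mpr h7⟩⟩

lemma Sib.fill_swap {G : SimpleGraph V} {a b : V} (h : Sib G a b) (M : List V) :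
    fillList G (a :: b :: M) = fillList G (b :: a :: M) := by
  rw [fillList_cons, fillList_cons, fillList_cons, fillList_cons,
    simplicial_def_empty h.simplicial_after, simplicial_def_empty h.symm.simplicial_after,
    h.def_eq, h.swap_eq]

lemma sib_elimList {a b : V} : ∀ (P : List V) (G : SimpleGraph V), Sib G a b →
    (∀ y ∈ P, y ≠ a ∧ y ≠ b) → Sib (elimList G P) a b := by
  intro P
  induction P with
  | nil => intro G h _; exact h
  | cons y P ih =>
    intro G h hP
    have hy := hP y List.mem_cons_self
    exact ih (elimG G y) (h.elim hy.1 hy.2) fun z hz => hP z (List.mem_cons_of_mem _ hz)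

lemma core {a b : V} (G : SimpleGraph V) (hs : Sib G a b) (P Q R : List V)
    (hb : b ∉ Q) (hP : ∀ y ∈ P, y ≠ a ∧ y ≠ b) :
    fillList G (P ++ a :: b :: (Q ++ R)) ≤ fillList G (P ++ a :: Q ++ b :: R) := by
  have hsplit : P ++ a :: Q ++ b :: R = P ++ (a :: (Q ++ b :: R)) := by simp
  rw [hsplit, fillList_append, fillList_append]
  refine Nat.add_le_add_left ?_ _
  set G1 := elimList G P with hG1
  have hs1 : Sib G1 a b := sib_elimList P G hs hP
  rw [fillList_cons, fillList_cons, fillList_cons,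
    simplicial_def_empty hs1.simplicial_after]
  simp only [Finset.card_empty, Nat.zero_add]
  exact Nat.add_le_add_left
    (fill_le Q R _ _ hb (RelE.self hs1.simplicial_after) hs1.simplicial_after) _

end Aux2
section Aux3
set_option linter.unusedSectionVars false
set_option linter.unusedVariables false
variable {V : Type*} [Fintype V] [DecidableEq V]

lemma isOrdering_of_perm {L L' : List V} (p : L.Perm L') (h : IsOrdering L) :
    IsOrdering L' :=
  ⟨p.nodup h.1, fun v => p.mem_iff.mp (h.2 v)⟩

lemma minFillIn_le (G : SimpleGraph V) {L : List V} (h : IsOrdering L) :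
    minFillIn G ≤ fillList G L :=
  Nat.sInf_le ⟨L, h, rfl⟩

lemma exists_optimal (G : SimpleGraph V) :
    ∃ L : List V, IsOrdering L ∧ fillList G L = minFillIn G := by
  have hne : ∃ n, n ∈ {n | ∃ L : List V, IsOrdering L ∧ fillList G L = n} := by
    refine ⟨fillList G (Finset.univ : Finset V).toList, (Finset.univ : Finset V).toList,
      ⟨Finset.nodup_toList _, fun v => Finset.mem_toList.mpr (Finset.mem_univ v)⟩, rfl⟩
  exact Nat.sInf_mem hne

theorem stmt_8' (G : SimpleGraph V) (a b : V) (h : Twins G a b) :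
    ∃ L1 L2 : List V, IsOrdering (L1 ++ a :: b :: L2) ∧
      fillList G (L1 ++ a :: b :: L2) = minFillIn G := by
  have hs : Sib G a b := h.sib
  obtain ⟨L, hL, hfill⟩ := exists_optimal G
  have ha : a ∈ L := hL.2 a
  obtain ⟨P, T, rfl⟩ := List.append_of_mem ha
  have hb : b ∈ P ++ a :: T := hL.2 b
  rw [List.mem_append, List.mem_cons] at hb
  have hnd := hL.1
  rcases hb with hbP | (hba | hbT)
  · -- b occurs before a
    obtain ⟨P1, P2, rfl⟩ := List.append_of_mem hbP
    have hL' : (P1 ++ b :: P2) ++ a :: T = P1 ++ b :: (P2 ++ a :: T) := by simp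
    rw [hL'] at hnd hL hfill
    obtain ⟨hndP1, hnd2, hdisj1⟩ := List.nodup_append'.mp hnd
    have hndrest := (List.nodup_cons.mp hnd2).2
    obtain ⟨hndP2, hnd3, hdisj2⟩ := List.nodup_append'.mp hndrest
    have hanP2 : a ∉ P2 := fun hh => hdisj2 hh List.mem_cons_self
    have hP1 : ∀ y ∈ P1, y ≠ b ∧ y ≠ a := by
      intro y hy
      constructor
      · intro hh
        refine hdisj1 hy ?_
        rw [hh]; exact List.mem_cons_self
      · intro hh
        refine hdisj1 hy ?_
        rw [hh]
        exact List.mem_cons_of_mem b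
          (List.mem_append.mpr (Or.inr List.mem_cons_self))
    have hcore := core G hs.symm P1 P2 T hanP2 hP1
    have heq' : (P1 ++ b :: P2 ++ a :: T : List V) = P1 ++ b :: (P2 ++ a :: T) := by simp
    rw [heq'] at hcore
    -- perm facts
    have hperm1 : (P1 ++ b :: a :: (P2 ++ T)).Perm (P1 ++ b :: (P2 ++ a :: T)) :=
      List.Perm.append_left P1 ((List.perm_middle).symm.cons b)
    have hord1 : IsOrdering (P1 ++ b :: a :: (P2 ++ T)) :=
      isOrdering_of_perm hperm1.symm hL
    have hswap : fillList G (P1 ++ a :: b :: (P2 ++ T)) =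
        fillList G (P1 ++ b :: a :: (P2 ++ T)) := by
      rw [fillList_append, fillList_append]
      congr 1
      exact (sib_elimList P1 G hs (fun y hy => ⟨(hP1 y hy).2, (hP1 y hy).1⟩)).fill_swap (P2 ++ T)
    have hord2 : IsOrdering (P1 ++ a :: b :: (P2 ++ T)) := by
      refine isOrdering_of_perm ?_ hord1
      exact List.Perm.append_left P1 ((List.Perm.swap a b (P2 ++ T)))
    refine ⟨P1, P2 ++ T, hord2, le_antisymm ?_ (minFillIn_le G hord2)⟩
    rw [hswap]
    exact hfill ▸ hcore
  · exact absurd hba.symm hs.1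
  · -- b occurs after a
    obtain ⟨Q, R, rfl⟩ := List.append_of_mem hbT
    obtain ⟨hndP, hnd2, hdisj1⟩ := List.nodup_append'.mp hnd
    have hndrest := (List.nodup_cons.mp hnd2).2
    obtain ⟨hndQ, hnd3, hdisj2⟩ := List.nodup_append'.mp hndrest
    have hbnQ : b ∉ Q := fun hh => hdisj2 hh List.mem_cons_self
    have hP : ∀ y ∈ P, y ≠ a ∧ y ≠ b := by
      intro y hy
      constructor
      · intro hh
        refine hdisj1 hy ?_
        rw [hh]; exact List.mem_cons_self
      · intro hh
        refine hdisj1 hy ?_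
        rw [hh]
        exact List.mem_cons_of_mem a
          (List.mem_append.mpr (Or.inr List.mem_cons_self))
    have hcore := core G hs P Q R hbnQ hP
    have heq : (P ++ a :: Q ++ b :: R : List V) = P ++ a :: (Q ++ b :: R) := by simp
    rw [heq] at hcore
    have hperm1 : (P ++ a :: b :: (Q ++ R)).Perm (P ++ a :: (Q ++ b :: R)) :=
      List.Perm.append_left P (((List.perm_middle).symm.cons a))
    have hord1 : IsOrdering (P ++ a :: b :: (Q ++ R)) :=
      isOrdering_of_perm (hperm1.symm) hL
    exact ⟨P, Q ++ R, hord1,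
      le_antisymm (le_of_le_of_eq hcore hfill) (minFillIn_le G hord1)⟩

end Aux3
/-- if `a` and `b` are twins, there is a minimum fill-in ordering in
which `a` and `b` are eliminated consecutively. -/
theorem stmt_8 (G : SimpleGraph V) (a b : V) (h : Twins G a b) :
    ∃ L1 L2 : List V, IsOrdering (L1 ++ a :: b :: L2) ∧
      fillList G (L1 ++ a :: b :: L2) = minFillIn G := by
  exact stmt_8' G a b h
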